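/- arXiv:1911.00433 — 3 statements merged into one kernel-verified Lean document; each statement's English description precedes it below -/
import Mathlib

section
/- Let V be a real Banach space, F : V → ℝ convex and continuous, and x̄ ∈ V. Then there exists a continuous linear functional L ∈ V* with L(h) ≤ F'(x̄, h) for all h ∈ V (i.e. L ∈ ∂F(x̄)) and inf{L(h) : ‖h‖ ≤ 1} = inf{F'(x̄, h) : ‖h‖ ≤ 1}. -/
open Filter

/-- Sandwich theorem for subdifferentials: for a convex continuous `F` there is a
continuous linear functional below the directional derivative at `x̄`, with the same
infimum over the unit ball. -/
theorem sandwich_theorem_for_subdifferentials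
    {V : Type*} [NormedAddCommGroup V] [NormedSpace ℝ V] [CompleteSpace V]
    (F : V → ℝ) (hconv : ConvexOn ℝ Set.univ F) (hcont : Continuous F)
    (xbar : V) (F' : V → ℝ)
    (hF' : ∀ h : V, Tendsto (fun t : ℝ => (F (xbar + t • h) - F xbar) / t)
      (nhdsWithin 0 (Set.Ioi 0)) (nhds (F' h))) :
    ∃ L : V →L[ℝ] ℝ, (∀ h : V, L h ≤ F' h) ∧
      sInf ((fun h => L h) '' Metric.closedBall (0 : V) 1) =
        sInf (F' '' Metric.closedBall (0 : V) 1) := by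
  -- multiplication by a positive constant preserves the filter 𝓝[>] 0
  have hmap : ∀ c : ℝ, 0 < c → Tendsto (fun t : ℝ => c * t)
      (nhdsWithin 0 (Set.Ioi 0)) (nhdsWithin 0 (Set.Ioi 0)) := by
    intro c hc
    rw [tendsto_nhdsWithin_iff]
    constructor
    · have : Tendsto (fun t : ℝ => c * t) (nhds 0) (nhds (c * 0)) :=
        (continuous_const.mul continuous_id).tendsto 0
      simpa using this.mono_left nhdsWithin_le_nhds
    · filter_upwards [self_mem_nhdsWithin] with t ht
      exact mul_pos hc ht
  -- F' 0 = 0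
  have P0 : F' 0 = 0 := by
    have h1 : Tendsto (fun t : ℝ => (F (xbar + t • (0 : V)) - F xbar) / t)
        (nhdsWithin 0 (Set.Ioi 0)) (nhds 0) := by
      have : (fun t : ℝ => (F (xbar + t • (0 : V)) - F xbar) / t) = fun _ => (0 : ℝ) := by
        funext t; simp
      rw [this]; exact tendsto_const_nhds
    exact tendsto_nhds_unique (hF' 0) h1
  -- positive homogeneity
  have Phom : ∀ c : ℝ, 0 < c → ∀ h : V, F' (c • h) = c * F' h := by
    intro c hc h
    have h2 := (hF' h).comp (hmap c hc)
    have h3 := h2.const_mul c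
    have h4 : Tendsto (fun t : ℝ => (F (xbar + t • (c • h)) - F xbar) / t)
        (nhdsWithin 0 (Set.Ioi 0)) (nhds (c * F' h)) := by
      apply h3.congr'
      filter_upwards [self_mem_nhdsWithin] with t ht
      have htpos : (0:ℝ) < t := ht
      have : t • (c • h) = (c * t) • h := by rw [smul_smul, mul_comm]
      rw [Function.comp_apply, this]
      field_simp
    exact tendsto_nhds_unique (hF' (c • h)) h4
  -- subadditivity
  have Psub : ∀ h₁ h₂ : V, F' (h₁ + h₂) ≤ F' h₁ + F' h₂ := by
    intro h₁ h₂
    have hA := (hF' h₁).comp (hmap 2 two_pos)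
    have hB := (hF' h₂).comp (hmap 2 two_pos)
    refine le_of_tendsto_of_tendsto (hF' (h₁ + h₂)) (hA.add hB) ?_
    filter_upwards [self_mem_nhdsWithin] with t ht
    have htpos : (0:ℝ) < t := ht
    have hcv := hconv.2 (Set.mem_univ (xbar + (2 * t) • h₁)) (Set.mem_univ (xbar + (2 * t) • h₂))
      (by norm_num : (0:ℝ) ≤ 1/2) (by norm_num : (0:ℝ) ≤ 1/2) (by norm_num)
    have heq : (1/2 : ℝ) • (xbar + (2 * t) • h₁) + (1/2 : ℝ) • (xbar + (2 * t) • h₂)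
        = xbar + t • (h₁ + h₂) := by
      module
    rw [heq] at hcv
    simp only [Function.comp_apply]
    rw [← add_div, div_le_div_iff₀ htpos (by linarith : (0:ℝ) < 2 * t)]
    have hcv' : F (xbar + t • (h₁ + h₂)) ≤
        (1 / 2) * F (xbar + (2 * t) • h₁) + (1 / 2) * F (xbar + (2 * t) • h₂) := hcv
    nlinarith [hcv']
  -- F' h ≤ F (xbar + h) - F xbar
  have Ple : ∀ h : V, F' h ≤ F (xbar + h) - F xbar := by
    intro h
    refine le_of_tendsto (hF' h) ?_
    filter_upwards [Ioo_mem_nhdsGT_of_mem (by constructor <;> norm_num : (0:ℝ) ∈ Set.Ico 0 1)]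
      with t ht
    obtain ⟨ht0, ht1⟩ := ht
    have hcv := hconv.2 (Set.mem_univ xbar) (Set.mem_univ (xbar + h))
      (by linarith : (0:ℝ) ≤ 1 - t) (le_of_lt ht0) (by ring)
    have heq : (1 - t) • xbar + t • (xbar + h) = xbar + t • h := by module
    rw [heq] at hcv
    simp only [smul_eq_mul] at hcv
    rw [div_le_iff₀ ht0]
    nlinarith [hcv]
  -- global linear bound from continuity at xbar
  obtain ⟨δ, hδpos, hδ⟩ := Metric.continuousAt_iff.mp (hcont.continuousAt (x := xbar)) 1 one_pos
  set C₀ : ℝ := 2 / δ with hC₀def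
  have hC₀pos : 0 < C₀ := by positivity
  have Pub : ∀ h : V, F' h ≤ C₀ * ‖h‖ := by
    intro h
    rcases eq_or_ne h 0 with rfl | hne
    · simp [P0]
    · have hn : (0:ℝ) < ‖h‖ := norm_pos_iff.mpr hne
      set c : ℝ := δ / (2 * ‖h‖) with hcdef
      have hcpos : 0 < c := by positivity
      have hdist : dist (xbar + c • h) xbar < δ := by
        rw [dist_eq_norm]
        simp only [add_sub_cancel_left]
        rw [norm_smul, Real.norm_eq_abs, abs_of_pos hcpos, hcdef]
        rw [div_mul_eq_mul_div, mul_comm]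
        rw [div_lt_iff₀ (by positivity : (0:ℝ) < 2 * ‖h‖)]
        nlinarith
      have h1 : F (xbar + c • h) - F xbar < 1 := by
        have := hδ hdist
        rw [Real.dist_eq] at this
        have := abs_lt.mp this
        linarith [this.2]
      have h2 : c * F' h ≤ 1 := by
        rw [← Phom c hcpos h]
        linarith [Ple (c • h)]
      have h3 : F' h ≤ 1 / c := by
        rw [le_div_iff₀ hcpos]
        linarith [h2]
      calc F' h ≤ 1 / c := h3
        _ = C₀ * ‖h‖ := by rw [hcdef, hC₀def]; field_simp
  have Plb : ∀ h : V, -(C₀ * ‖h‖) ≤ F' h := by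
    intro h
    have h0 : F' (h + (-h)) ≤ F' h + F' (-h) := Psub h (-h)
    simp only [add_neg_cancel, P0] at h0
    have := Pub (-h)
    rw [norm_neg] at this
    linarith
  -- the infimum over the unit ball
  set B : Set ℝ := F' '' Metric.closedBall (0 : V) 1 with hBdef
  have hBne : B.Nonempty := ⟨F' 0, 0, Metric.mem_closedBall_self zero_le_one, rfl⟩
  have hBbd : BddBelow B := by
    refine ⟨-C₀, ?_⟩
    rintro b ⟨h, hh, rfl⟩
    have hh1 : ‖h‖ ≤ 1 := by simpa [Metric.mem_closedBall, dist_eq_norm] using hh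
    have := Plb h
    nlinarith
  set m : ℝ := sInf B with hmdef
  have hm0 : m ≤ 0 := by
    have : (0:ℝ) ∈ B := ⟨0, Metric.mem_closedBall_self zero_le_one, P0⟩
    exact csInf_le hBbd this
  have hmlow : ∀ u : V, m * ‖u‖ ≤ F' u := by
    intro u
    rcases eq_or_ne u 0 with rfl | hne
    · simp [P0]
    · have hn : (0:ℝ) < ‖u‖ := norm_pos_iff.mpr hne
      have hmem : (‖u‖⁻¹ • u) ∈ Metric.closedBall (0 : V) 1 := by
        simp [Metric.mem_closedBall, dist_eq_norm, norm_smul, abs_of_pos (inv_pos.mpr hn),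
          inv_mul_cancel₀ hn.ne']
      have h1 : m ≤ F' (‖u‖⁻¹ • u) := csInf_le hBbd ⟨_, hmem, rfl⟩
      have h2 : ‖u‖ * F' (‖u‖⁻¹ • u) = F' u := by
        rw [← Phom ‖u‖ hn, smul_smul, mul_inv_cancel₀ hn.ne', one_smul]
      nlinarith
  set C : ℝ := -m with hCdef
  have hC : 0 ≤ C := by simp [hCdef]; linarith
  -- the inf-convolution N
  set N : V → ℝ := fun h => sInf (Set.range fun u => F' u + C * ‖h - u‖) with hNdef
  have hNlb : ∀ h u : V, m * ‖h‖ ≤ F' u + C * ‖h - u‖ := by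
    intro h u
    have h1 : m * ‖u‖ ≤ F' u := hmlow u
    have h2 : ‖u‖ - ‖h‖ ≤ ‖h - u‖ := by
      have := norm_sub_norm_le u h
      rw [norm_sub_rev] at this
      linarith [le_abs_self (‖u‖ - ‖h‖), this]
    have hm : m = -C := by rw [hCdef]; ring
    rw [hm] at h1 ⊢
    nlinarith [mul_le_mul_of_nonneg_left h2 hC]
  have hNbdd : ∀ h : V, BddBelow (Set.range fun u => F' u + C * ‖h - u‖) := by
    intro h
    exact ⟨m * ‖h‖, by rintro b ⟨u, rfl⟩; exact hNlb h u⟩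
  have hNle : ∀ h : V, N h ≤ F' h := by
    intro h
    have : F' h + C * ‖h - h‖ = F' h := by simp
    calc N h ≤ F' h + C * ‖h - h‖ := csInf_le (hNbdd h) ⟨h, rfl⟩
      _ = F' h := this
  have hNlbd : ∀ h : V, m * ‖h‖ ≤ N h :=
    fun h => le_csInf ⟨_, Set.mem_range_self 0⟩ (by rintro b ⟨u, rfl⟩; exact hNlb h u)
  have hNq : ∀ h : V, N h ≤ C * ‖h‖ := by
    intro h
    have : F' 0 + C * ‖h - 0‖ = C * ‖h‖ := by simp [P0]
    calc N h ≤ F' 0 + C * ‖h - 0‖ := csInf_le (hNbdd h) ⟨0, rfl⟩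
      _ = C * ‖h‖ := this
  -- N is subadditive
  have Nadd : ∀ x y : V, N (x + y) ≤ N x + N y := by
    intro x y
    have key : ∀ u v : V, N (x + y) ≤ (F' u + C * ‖x - u‖) + (F' v + C * ‖y - v‖) := by
      intro u v
      have h1 : N (x + y) ≤ F' (u + v) + C * ‖(x + y) - (u + v)‖ :=
        csInf_le (hNbdd _) ⟨u + v, rfl⟩
      have h2 : ‖(x + y) - (u + v)‖ ≤ ‖x - u‖ + ‖y - v‖ := by
        have : (x + y) - (u + v) = (x - u) + (y - v) := by abel
        rw [this]; exact norm_add_le _ _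
      have h3 := Psub u v
      nlinarith [mul_le_mul_of_nonneg_left h2 hC]
    have step1 : ∀ v : V, N (x + y) - (F' v + C * ‖y - v‖) ≤ N x := by
      intro v
      refine le_csInf ⟨_, Set.mem_range_self 0⟩ ?_
      rintro b ⟨u, rfl⟩
      beta_reduce
      linarith [key u v]
    have step2 : N (x + y) - N x ≤ N y := by
      refine le_csInf ⟨_, Set.mem_range_self 0⟩ ?_
      rintro b ⟨v, rfl⟩
      beta_reduce
      linarith [step1 v]
    linarith
  -- N is positively homogeneous
  have Nhom_le : ∀ c : ℝ, 0 < c → ∀ x : V, N (c • x) ≤ c * N x := by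
    intro c hc x
    have key : ∀ u : V, c⁻¹ * N (c • x) ≤ F' u + C * ‖x - u‖ := by
      intro u
      have h1 : N (c • x) ≤ F' (c • u) + C * ‖c • x - c • u‖ := csInf_le (hNbdd _) ⟨c • u, rfl⟩
      have h2 : ‖c • x - c • u‖ = c * ‖x - u‖ := by
        rw [← smul_sub, norm_smul, Real.norm_eq_abs, abs_of_pos hc]
      rw [h2, Phom c hc] at h1
      rw [inv_mul_le_iff₀ hc]
      nlinarith [h1]
    have : c⁻¹ * N (c • x) ≤ N x := by
      refine le_csInf ⟨_, Set.mem_range_self 0⟩ ?_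
      rintro b ⟨u, rfl⟩
      exact key u
    calc N (c • x) = c * (c⁻¹ * N (c • x)) := by field_simp
      _ ≤ c * N x := by nlinarith [this]
  have Nhom : ∀ c : ℝ, 0 < c → ∀ x : V, N (c • x) = c * N x := by
    intro c hc x
    refine le_antisymm (Nhom_le c hc x) ?_
    have := Nhom_le c⁻¹ (inv_pos.mpr hc) (c • x)
    rw [smul_smul, inv_mul_cancel₀ hc.ne', one_smul] at this
    have h5 := mul_le_mul_of_nonneg_left this hc.le
    rw [← mul_assoc, mul_inv_cancel₀ hc.ne', one_mul] at h5
    linarith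
  -- Hahn-Banach
  obtain ⟨g, -, hg⟩ := exists_extension_of_le_sublinear ⟨⊥, 0⟩ N Nhom Nadd (by
    rintro ⟨x, hx⟩
    have hx0 : x = 0 := by simpa using hx
    subst hx0
    have := hNlbd 0
    simp only [norm_zero, mul_zero] at this
    simpa using this)
  have hgle : ∀ h : V, g h ≤ F' h := fun h => (hg h).trans (hNle h)
  have hglow : ∀ h : V, m * ‖h‖ ≤ g h := by
    intro h
    have h1 : g (-h) ≤ C * ‖h‖ := (hg (-h)).trans (by simpa using hNq (-h))
    have h2 : g (-h) = -g h := map_neg g h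
    rw [h2] at h1
    rw [hCdef] at h1
    linarith
  have hbound : ∀ h : V, ‖g h‖ ≤ (C + C₀) * ‖h‖ := by
    intro h
    rw [Real.norm_eq_abs, abs_le]
    constructor
    · have := hglow h
      have hn : (0:ℝ) ≤ ‖h‖ := norm_nonneg h
      nlinarith [this]
    · have := (hgle h).trans (Pub h)
      have hn : (0:ℝ) ≤ ‖h‖ := norm_nonneg h
      nlinarith
  set L : V →L[ℝ] ℝ := LinearMap.mkContinuous g (C + C₀) hbound with hLdef
  have hLg : ∀ h : V, L h = g h := fun h => rfl
  refine ⟨L, fun h => (hLg h).le.trans (hgle h), ?_⟩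
  set A : Set ℝ := (fun h => L h) '' Metric.closedBall (0 : V) 1 with hAdef
  have hAne : A.Nonempty := ⟨L 0, 0, Metric.mem_closedBall_self zero_le_one, rfl⟩
  have hmem_ball : ∀ h : V, h ∈ Metric.closedBall (0 : V) 1 → ‖h‖ ≤ 1 := by
    intro h hh
    simpa [Metric.mem_closedBall, dist_eq_norm] using hh
  have hAbd : BddBelow A := by
    refine ⟨m, ?_⟩
    rintro a ⟨h, hh, rfl⟩
    have h1 : m * ‖h‖ ≤ L h := by rw [hLg]; exact hglow h
    have h2 : ‖h‖ ≤ 1 := hmem_ball h hh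
    nlinarith
  have hge : m ≤ sInf A := by
    refine le_csInf hAne ?_
    rintro a ⟨h, hh, rfl⟩
    have h1 : m * ‖h‖ ≤ L h := by rw [hLg]; exact hglow h
    have h2 : ‖h‖ ≤ 1 := hmem_ball h hh
    nlinarith
  have hle2 : sInf A ≤ m := by
    rw [hmdef]
    refine le_csInf hBne ?_
    rintro b ⟨h, hh, rfl⟩
    have : L h ∈ A := ⟨h, hh, rfl⟩
    exact (csInf_le hAbd this).trans ((hLg h).le.trans (hgle h))
  exact le_antisymm hle2 hge
end

section
/- Let B be a real Banach space, Z a closed subspace of B that is not proximinal, and f₀ ∈ B a point whose distance to Z is not attained. Then for every ε > 0 there exist f_T ∈ Z and L ∈ B* with L ∈ J(f₀ + f_T) (i.e. L(f₀ + f_T) = ‖L‖·‖f₀ + f_T‖ and ‖L‖ = ‖f₀ + f_T‖) such that the restriction of L to Z has norm less than ε. -/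
/-- Weak Ekeland variational principle for `z ↦ ‖f₀ + z‖` on a closed subspace. -/
theorem ekeland_norm_aux {B : Type*} [NormedAddCommGroup B] [NormedSpace ℝ B] [CompleteSpace B]
    (Z : Submodule ℝ B) (hZ : IsClosed (Z : Set B)) (f₀ : B) {δ : ℝ} (hδ : 0 < δ) :
    ∃ fT ∈ Z, ‖f₀ + fT‖ ≤ ‖f₀‖ ∧
      ∀ z ∈ Z, ‖f₀ + fT‖ ≤ ‖f₀ + z‖ + δ * ‖z - fT‖ := by
  classical
  set ψ : B → ℝ := fun z => ‖f₀ + z‖ with hψdef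
  set S : B → Set B := fun x => {z | z ∈ Z ∧ ψ z + δ * ‖z - x‖ ≤ ψ x} with hSdef
  have hself : ∀ x ∈ Z, x ∈ S x := fun x hx => ⟨hx, by simp⟩
  have hbdd : ∀ x, BddBelow (ψ '' S x) := by
    intro x
    exact ⟨0, by rintro a ⟨z, _, rfl⟩; exact norm_nonneg _⟩
  set m : B → ℝ := fun x => sInf (ψ '' S x) with hmdef
  have hm_le : ∀ x, ∀ z ∈ S x, m x ≤ ψ z := fun x z hz =>
    csInf_le (hbdd x) ⟨z, hz, rfl⟩
  have htrans : ∀ x y, y ∈ S x → S y ⊆ S x := by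
    rintro x y ⟨hyZ, hy⟩ z ⟨hzZ, hz⟩
    refine ⟨hzZ, ?_⟩
    have htri : ‖z - x‖ ≤ ‖z - y‖ + ‖y - x‖ := norm_sub_le_norm_sub_add_norm_sub z y x
    nlinarith [hδ]
  have hm_mono : ∀ x y, y ∈ S x → (S y).Nonempty → m x ≤ m y := by
    intro x y hy hne
    exact le_csInf (hne.image _) (by rintro a ⟨z, hz, rfl⟩; exact hm_le x z (htrans x y hy hz))
  -- choice of next point
  have hstep : ∀ (n : ℕ) (x : B), x ∈ Z → ∃ y, y ∈ S x ∧ ψ y ≤ m x + (1/2) ^ n := by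
    intro n x hx
    have hne : (ψ '' S x).Nonempty := ⟨ψ x, x, hself x hx, rfl⟩
    obtain ⟨a, ⟨y, hy, rfl⟩, ha⟩ := Real.lt_sInf_add_pos hne (by positivity : (0:ℝ) < (1/2)^n)
    exact ⟨y, hy, ha.le⟩
  choose! f hf1 hf2 using hstep
  set u : ℕ → B := fun n => Nat.rec (0 : B) (fun k x => f k x) n with hudef
  have hu0 : u 0 = 0 := rfl
  have husucc : ∀ n, u (n + 1) = f n (u n) := fun n => rfl
  have huZ : ∀ n, u n ∈ Z := by
    intro n
    induction n with
    | zero => exact Z.zero_mem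
    | succ k ih => exact (hf1 k (u k) ih).1
  have hS : ∀ n, u (n + 1) ∈ S (u n) := fun n => hf1 n (u n) (huZ n)
  have hψS : ∀ n, ψ (u (n + 1)) ≤ m (u n) + (1/2) ^ n := fun n => hf2 n (u n) (huZ n)
  have hchain : ∀ n k, k ≥ n + 1 → u k ∈ S (u n) := by
    intro n k hk
    induction k with
    | zero => omega
    | succ j ih =>
      rcases Nat.lt_or_ge (j+1) (n+2) with h | h
      · have : j + 1 = n + 1 := by omega
        rw [this]; exact hS n
      · exact htrans (u n) (u j) (ih (by omega)) (hS j)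
  -- Cauchy
  have hdist : ∀ n, dist (u n) (u (n + 1)) ≤ ((‖f₀‖ + 2) / δ) * (1/2) ^ n := by
    intro n
    have hnorm : δ * ‖u (n+1) - u n‖ ≤ ψ (u n) - ψ (u (n+1)) := by
      have := (hS n).2; linarith
    rw [dist_comm, dist_eq_norm]
    cases n with
    | zero =>
      have h1 : ψ (u 0) = ‖f₀‖ := by simp [hu0, hψdef]
      have h2 : 0 ≤ ψ (u (0+1)) := norm_nonneg _
      rw [pow_zero, mul_one, le_div_iff₀ hδ]
      nlinarith
    | succ k =>
      have h1 : ψ (u (k+1)) ≤ m (u k) + (1/2) ^ k := hψS k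
      have h2 : m (u k) ≤ m (u (k+1)) :=
        hm_mono (u k) (u (k+1)) (hS k) ⟨u (k+2), hS (k+1)⟩
      have h3 : m (u (k+1)) ≤ ψ (u (k+2)) := hm_le _ _ (hS (k+1))
      have h4 : δ * ‖u (k+2) - u (k+1)‖ ≤ (1/2) ^ k := by linarith
      have hp : (0:ℝ) < (1/2:ℝ) ^ k := by positivity
      rw [div_mul_eq_mul_div, le_div_iff₀ hδ, pow_succ]
      nlinarith [norm_nonneg f₀]
  have hcauchy : CauchySeq u :=
    cauchySeq_of_le_geometric (1/2) ((‖f₀‖ + 2) / δ) (by norm_num) hdist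
  obtain ⟨fT, hfT⟩ := cauchySeq_tendsto_of_complete hcauchy
  have hSclosed : ∀ x, IsClosed (S x) := by
    intro x
    have : S x = (Z : Set B) ∩ {z | ψ z + δ * ‖z - x‖ ≤ ψ x} := rfl
    rw [this]
    exact hZ.inter (isClosed_le (by fun_prop) continuous_const)
  have hfTZ : fT ∈ Z := hZ.mem_of_tendsto hfT (Filter.Eventually.of_forall huZ)
  have hfTS : ∀ n, fT ∈ S (u n) := by
    intro n
    refine (hSclosed (u n)).mem_of_tendsto hfT ?_
    filter_upwards [Filter.eventually_ge_atTop (n+1)] with k hk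
    exact hchain n k hk
  refine ⟨fT, hfTZ, ?_, ?_⟩
  · have h := (hfTS 0).2
    have h0 : ψ (u 0) = ‖f₀‖ := by simp [hu0, hψdef]
    have := mul_nonneg hδ.le (norm_nonneg (fT - u 0))
    show ψ fT ≤ ‖f₀‖
    linarith
  · intro z hzZ
    by_contra hcon
    push_neg at hcon
    have hzS : z ∈ S fT := ⟨hzZ, by linarith⟩
    have hzSn : ∀ n, z ∈ S (u n) := fun n => htrans (u n) fT (hfTS n) hzS
    have hlim : ∀ n, ψ (u (n+1)) ≤ ψ z + (1/2) ^ n := by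
      intro n
      have := hm_le (u n) z (hzSn n)
      have := hψS n
      linarith
    have htend : Filter.Tendsto (fun n => ψ (u (n+1))) Filter.atTop (nhds (ψ fT)) := by
      have hc : Continuous ψ := by fun_prop
      exact (hc.continuousAt.tendsto.comp (hfT.comp (Filter.tendsto_add_atTop_nat 1)))
    have htend2 : Filter.Tendsto (fun n : ℕ => ψ z + (1/2) ^ n) Filter.atTop (nhds (ψ z)) := by
      have : Filter.Tendsto (fun n : ℕ => ((1:ℝ)/2) ^ n) Filter.atTop (nhds 0) :=
        tendsto_pow_atTop_nhds_zero_of_lt_one (by norm_num) (by norm_num)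
      simpa using Filter.Tendsto.const_add (ψ z) this
    have hle : ψ fT ≤ ψ z := le_of_tendsto_of_tendsto' htend htend2 hlim
    have hpos : 0 ≤ δ * ‖z - fT‖ := mul_nonneg hδ.le (norm_nonneg _)
    linarith [hcon]

set_option maxHeartbeats 1000000 in
/-- If the distance from `f₀` to the closed subspace `Z` is not attained, then for every
`ε > 0` there are `f_T ∈ Z` and a duality element `L ∈ J(f₀ + f_T)` whose restriction
to `Z` has norm less than `ε`. -/
theorem approximate_duality_element_of_not_proximinal
    {B : Type*} [NormedAddCommGroup B] [NormedSpace ℝ B] [CompleteSpace B]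
    (Z : Submodule ℝ B) (hZ : IsClosed (Z : Set B))
    (f₀ : B)
    (hnot : ¬ ∃ z ∈ Z, ‖f₀ - z‖ = Metric.infDist f₀ (Z : Set B)) :
    ∀ ε > (0 : ℝ), ∃ fT ∈ Z, ∃ L : B →L[ℝ] ℝ,
      L (f₀ + fT) = ‖L‖ * ‖f₀ + fT‖ ∧ ‖L‖ = ‖f₀ + fT‖ ∧
      ‖L.comp Z.subtypeL‖ < ε := by
  intro ε hε
  have hf₀Z : f₀ ∉ (Z : Set B) := by
    intro h
    exact hnot ⟨f₀, h, by simp [Metric.infDist_zero_of_mem h]⟩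
  have hdpos : 0 < Metric.infDist f₀ (Z : Set B) :=
    ((hZ.notMem_iff_infDist_pos ⟨0, Z.zero_mem⟩).mp hf₀Z)
  set δ : ℝ := min (ε / (2 * (‖f₀‖ + 1))) 1 with hδdef
  have hδpos : 0 < δ := lt_min (by positivity) one_pos
  have hδ1 : δ ≤ 1 := min_le_right _ _
  have hδε : δ ≤ ε / (2 * (‖f₀‖ + 1)) := min_le_left _ _
  obtain ⟨fT, hfTZ, hfTnorm, hEk⟩ := ekeland_norm_aux Z hZ f₀ hδpos
  set x : B := f₀ + fT with hxdef
  set r : ℝ := ‖x‖ with hrdef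
  have hrpos : 0 < r := by
    have h1 : Metric.infDist f₀ (Z : Set B) ≤ dist f₀ (-fT) :=
      Metric.infDist_le_dist_of_mem (Z.neg_mem hfTZ)
    have h2 : dist f₀ (-fT) = r := by rw [dist_eq_norm, sub_neg_eq_add]
    linarith
  have hx0 : x ≠ 0 := fun h => by simp [hrdef, h] at hrpos
  -- the sublinear functional `q`
  set q : B → ℝ := fun w => ⨅ z : Z, (‖w - (z : B)‖ + δ * ‖(z : B)‖) with hqdef
  have hbdd : ∀ w, BddBelow (Set.range fun z : Z => ‖w - (z : B)‖ + δ * ‖(z : B)‖) := by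
    intro w
    refine ⟨0, ?_⟩
    rintro a ⟨z, rfl⟩
    positivity
  have hq_le : ∀ (w : B) (z : Z), q w ≤ ‖w - (z : B)‖ + δ * ‖(z : B)‖ :=
    fun w z => ciInf_le (hbdd w) z
  have hq_norm_le : ∀ w, q w ≤ ‖w‖ := by
    intro w
    have := hq_le w 0
    simpa using this
  have hq_lower : ∀ w, δ * ‖w‖ ≤ q w := by
    intro w
    refine le_ciInf fun z => ?_
    have h2 : ‖w‖ - ‖(z : B)‖ ≤ ‖w - (z : B)‖ := norm_sub_norm_le w (z : B)
    have h3 : ‖(z : B)‖ - ‖w‖ ≤ ‖w - (z : B)‖ := by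
      have := norm_sub_norm_le (z : B) w
      rwa [norm_sub_rev] at this
    rcases le_total ‖(z : B)‖ ‖w‖ with h | h
    · nlinarith [mul_le_mul_of_nonneg_right hδ1 (sub_nonneg.mpr h)]
    · nlinarith [mul_le_mul_of_nonneg_left h hδpos.le, norm_nonneg (w - (z : B))]
  have hq_Z : ∀ z : Z, q (z : B) ≤ δ * ‖(z : B)‖ := by
    intro z
    have := hq_le (z : B) z
    simpa using this
  have hq_x : q x = r := by
    refine le_antisymm (hq_norm_le x) (le_ciInf fun z => ?_)
    have h := hEk (fT - (z : B)) (Z.sub_mem hfTZ z.2)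
    have h1 : f₀ + (fT - (z : B)) = x - (z : B) := by rw [hxdef]; abel
    have h2 : fT - (z : B) - fT = -(z : B) := by abel
    rw [h1, h2, norm_neg] at h
    exact h
  have hq_smul_le : ∀ c : ℝ, 0 < c → ∀ w, q (c • w) ≤ c * q w := by
    intro c hc w
    have key : ∀ z : Z, c⁻¹ * q (c • w) ≤ ‖w - (z : B)‖ + δ * ‖(z : B)‖ := by
      intro z
      have h := hq_le (c • w) (c • z)
      have h1 : ‖c • w - ((c • z : Z) : B)‖ = c * ‖w - (z : B)‖ := by
        rw [Submodule.coe_smul, ← smul_sub, norm_smul, Real.norm_eq_abs, abs_of_pos hc]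
      have h2 : ‖((c • z : Z) : B)‖ = c * ‖(z : B)‖ := by
        rw [Submodule.coe_smul, norm_smul, Real.norm_eq_abs, abs_of_pos hc]
      rw [h1, h2] at h
      calc c⁻¹ * q (c • w) ≤ c⁻¹ * (c * ‖w - (z : B)‖ + δ * (c * ‖(z : B)‖)) :=
            mul_le_mul_of_nonneg_left h (inv_nonneg.mpr hc.le)
        _ = ‖w - (z : B)‖ + δ * ‖(z : B)‖ := by field_simp
    have h3 : c⁻¹ * q (c • w) ≤ q w := le_ciInf key
    calc q (c • w) = c * (c⁻¹ * q (c • w)) := by field_simp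
      _ ≤ c * q w := mul_le_mul_of_nonneg_left h3 hc.le
  have hq_smul : ∀ c : ℝ, 0 < c → ∀ w, q (c • w) = c * q w := by
    intro c hc w
    refine le_antisymm (hq_smul_le c hc w) ?_
    have h := hq_smul_le c⁻¹ (inv_pos.mpr hc) (c • w)
    rw [inv_smul_smul₀ hc.ne'] at h
    calc c * q w ≤ c * (c⁻¹ * q (c • w)) := mul_le_mul_of_nonneg_left h hc.le
      _ = q (c • w) := by field_simp
  have hq_add : ∀ w₁ w₂, q (w₁ + w₂) ≤ q w₁ + q w₂ := by
    intro w₁ w₂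
    refine le_of_forall_pos_le_add fun η hη => ?_
    obtain ⟨z₁, h₁⟩ := exists_lt_of_ciInf_lt (show q w₁ < q w₁ + η / 2 by linarith)
    obtain ⟨z₂, h₂⟩ := exists_lt_of_ciInf_lt (show q w₂ < q w₂ + η / 2 by linarith)
    have h := hq_le (w₁ + w₂) (z₁ + z₂)
    have e1 : (w₁ + w₂) - ((z₁ : B) + (z₂ : B)) = (w₁ - z₁) + (w₂ - z₂) := by abel
    rw [Submodule.coe_add, e1] at h
    have t1 : ‖(w₁ - (z₁ : B)) + (w₂ - (z₂ : B))‖ ≤ ‖w₁ - (z₁ : B)‖ + ‖w₂ - (z₂ : B)‖ :=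
      norm_add_le _ _
    have t2 : ‖(z₁ : B) + (z₂ : B)‖ ≤ ‖(z₁ : B)‖ + ‖(z₂ : B)‖ := norm_add_le _ _
    nlinarith [hδpos]
  -- Hahn–Banach extension
  set pf : B →ₗ.[ℝ] ℝ := LinearPMap.mkSpanSingleton x r hx0 with hpfdef
  have hxmem : x ∈ pf.domain := Submodule.mem_span_singleton_self x
  have hpf_val : ∀ (t : ℝ) (h : t • x ∈ pf.domain), pf ⟨t • x, h⟩ = t * r := by
    intro t h
    exact LinearPMap.mkSpanSingleton'_apply x r _ t h
  have hf_bound : ∀ v : pf.domain, pf v ≤ q (v : B) := by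
    intro v
    obtain ⟨t, ht⟩ := Submodule.mem_span_singleton.mp v.2
    have hv : v = ⟨t • x, ht ▸ v.2⟩ := Subtype.ext ht.symm
    rw [hv, hpf_val t _]
    rcases lt_trichotomy t 0 with htneg | htzero | htpos
    · have h1 : t * r ≤ 0 := mul_nonpos_of_nonpos_of_nonneg htneg.le hrpos.le
      have h2 : 0 ≤ q (t • x) := le_trans (by positivity) (hq_lower (t • x))
      linarith
    · subst htzero
      have h2 : 0 ≤ q ((0:ℝ) • x) := le_trans (by positivity) (hq_lower _)
      simpa using h2
    · rw [hq_smul t htpos x, hq_x]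
  obtain ⟨g, hg_eq, hg_le⟩ := exists_extension_of_le_sublinear pf q hq_smul hq_add hf_bound
  have hgx : g x = r := by
    have h := hg_eq ⟨x, hxmem⟩
    have h2 : pf ⟨x, hxmem⟩ = r := by
      have : (⟨x, hxmem⟩ : pf.domain) = ⟨(1:ℝ) • x, by simpa using hxmem⟩ :=
        Subtype.ext (by simp)
      rw [this, hpf_val 1 _, one_mul]
    rw [h2] at h
    exact h
  have hg_abs : ∀ w, |g w| ≤ ‖w‖ := by
    intro w
    rw [abs_le]
    constructor
    · have h := (hg_le (-w)).trans (hq_norm_le (-w))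
      rw [map_neg, norm_neg] at h
      linarith
    · exact (hg_le w).trans (hq_norm_le w)
  set L : B →L[ℝ] ℝ := (r • g).mkContinuous r (fun w => by
    rw [LinearMap.smul_apply, smul_eq_mul, Real.norm_eq_abs, abs_mul, abs_of_pos hrpos]
    exact mul_le_mul_of_nonneg_left (hg_abs w) hrpos.le) with hLdef
  have hL_apply : ∀ w, L w = r * g w := fun w => rfl
  have hLx : L x = r * r := by rw [hL_apply, hgx]
  have hLnorm : ‖L‖ = r := by
    refine le_antisymm (LinearMap.mkContinuous_norm_le _ hrpos.le _) ?_
    have h := L.le_opNorm x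
    rw [hLx] at h
    have h2 : r * r ≤ ‖L‖ * r := by
      calc r * r = |r * r| := (abs_of_pos (by positivity)).symm
        _ ≤ ‖L‖ * r := by rw [← Real.norm_eq_abs]; exact h
    nlinarith
  refine ⟨fT, hfTZ, L, ?_, ?_, ?_⟩
  · rw [hLnorm]
    exact hLx
  · rw [hLnorm]
  · have hbound : ∀ z : Z, ‖(L.comp Z.subtypeL) z‖ ≤ r * δ * ‖z‖ := by
      intro z
      have habs : |g (z : B)| ≤ δ * ‖(z : B)‖ := by
        rw [abs_le]
        constructor
        · have hq2 : q (-(z : B)) ≤ δ * ‖(z : B)‖ := by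
            have := hq_Z (-z)
            simpa using this
          have h := (hg_le (-(z : B))).trans hq2
          rw [map_neg] at h
          linarith
        · exact (hg_le (z : B)).trans (hq_Z z)
      have h1 : (L.comp Z.subtypeL) z = r * g (z : B) := hL_apply (z : B)
      rw [h1, Real.norm_eq_abs, abs_mul, abs_of_pos hrpos]
      have h2 : ‖z‖ = ‖(z : B)‖ := rfl
      rw [h2, mul_assoc]
      exact mul_le_mul_of_nonneg_left habs hrpos.le
    have hle : ‖L.comp Z.subtypeL‖ ≤ r * δ :=
      ContinuousLinearMap.opNorm_le_bound _ (by positivity) hbound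
    have hδε' : δ * (2 * (‖f₀‖ + 1)) ≤ ε := (le_div_iff₀ (by positivity)).mp hδε
    have hfin : r * δ < ε := by nlinarith [norm_nonneg f₀]
    linarith
end

section
/- Let L = (n/(n+1))_{n≥1} ∈ ℓ∞ acting on ℓ¹, and let f₀ ∈ ℓ¹ satisfy L(f₀) = 1. Then ‖f₀‖₁ > 1, and for every L̂ ∈ ℓ∞ belonging to the duality set J(f₀) (i.e. L̂(f₀) = ‖L̂‖_∞·‖f₀‖₁ and ‖L̂‖_∞ = ‖f₀‖₁) we have ‖L̂ − cL‖_∞ ≥ ‖f₀‖₁ − 1 > 0 for c = 1; in particular dist(J(f₀), span{L}) is bounded below by a positive constant depending on f₀. -/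
open scoped ENNReal
/-- The sequence `(1/2, 2/3, 3/4, …)` as an element of `ℓ∞`. -/
noncomputable def Lseq : lp (fun _ : ℕ => ℝ) ∞ :=
  ⟨fun n => ((n : ℝ) + 1) / ((n : ℝ) + 2), by
    apply memℓp_infty
    refine ⟨1, ?_⟩
    rintro x ⟨n, rfl⟩
    have h1 : (0 : ℝ) ≤ (n : ℝ) + 1 := by positivity
    have h2 : (0 : ℝ) < (n : ℝ) + 2 := by positivity
    simp only [Real.norm_eq_abs]
    rw [abs_of_nonneg (div_nonneg h1 h2.le)]
    rw [div_le_one h2]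
    linarith⟩

lemma Lseq_apply (n : ℕ) : Lseq n = ((n : ℝ) + 1) / ((n : ℝ) + 2) := rfl

lemma Lseq_nonneg (n : ℕ) : 0 ≤ Lseq n := by
  rw [Lseq_apply]; positivity

lemma Lseq_lt_one (n : ℕ) : Lseq n < 1 := by
  rw [Lseq_apply, div_lt_one (by positivity)]; linarith

/-- If `f₀ ∈ ℓ¹` interpolates `L(f₀) = 1` for `L = (n/(n+1))ₙ`, then `‖f₀‖ > 1` and any
duality element `L̂ ∈ J(f₀)` is at distance at least `‖f₀‖₁ - 1 > 0` from `L`. -/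
theorem duality_elements_far_from_L
    (f₀ : lp (fun _ : ℕ => ℝ) 1)
    (hinterp : (∑' n : ℕ, Lseq n * f₀ n) = 1) :
    1 < ‖f₀‖ ∧
    ∀ Lhat : lp (fun _ : ℕ => ℝ) ∞,
      (∑' n : ℕ, Lhat n * f₀ n) = ‖Lhat‖ * ‖f₀‖ → ‖Lhat‖ = ‖f₀‖ →
      ‖Lhat - Lseq‖ ≥ ‖f₀‖ - 1 := by
  have htop : (1 : ℝ≥0∞).toReal = 1 := by simp
  have hpos : 0 < (1 : ℝ≥0∞).toReal := by rw [htop]; norm_num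
  have hsum : Summable fun n : ℕ => ‖f₀ n‖ := by
    have := (lp.memℓp f₀).summable hpos
    simpa [htop] using this
  have hnorm : ‖f₀‖ = ∑' n : ℕ, ‖f₀ n‖ := by
    rw [lp.norm_eq_tsum_rpow hpos]
    simp [htop]
  -- summability of the interpolation series
  have hsumL : Summable fun n : ℕ => Lseq n * f₀ n := by
    refine Summable.of_norm_bounded hsum fun n => ?_
    rw [norm_mul, Real.norm_eq_abs (Lseq n), abs_of_nonneg (Lseq_nonneg n)]
    exact mul_le_of_le_one_left (norm_nonneg _) (Lseq_lt_one n).le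
  have h1 : 1 < ‖f₀‖ := by
    by_contra h
    push_neg at h
    have hterm : ∀ n : ℕ, Lseq n * f₀ n ≤ ‖f₀ n‖ := fun n => by
      calc Lseq n * f₀ n ≤ |Lseq n * f₀ n| := le_abs_self _
        _ = |Lseq n| * |f₀ n| := abs_mul _ _
        _ ≤ 1 * |f₀ n| := by
            have := (Lseq_lt_one n).le
            have h0 := Lseq_nonneg n
            have : |Lseq n| ≤ 1 := by rw [abs_of_nonneg h0]; exact this
            exact mul_le_mul_of_nonneg_right this (abs_nonneg _)
        _ = ‖f₀ n‖ := by rw [one_mul, Real.norm_eq_abs]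
    have hdiff : Summable fun n : ℕ => ‖f₀ n‖ - Lseq n * f₀ n := hsum.sub hsumL
    have hts : (∑' n : ℕ, (‖f₀ n‖ - Lseq n * f₀ n)) = ‖f₀‖ - 1 := by
      rw [Summable.tsum_sub hsum hsumL, hinterp, hnorm]
    have hnn : ∀ n : ℕ, 0 ≤ ‖f₀ n‖ - Lseq n * f₀ n := fun n => sub_nonneg.mpr (hterm n)
    have hz : ∀ n : ℕ, ‖f₀ n‖ - Lseq n * f₀ n = 0 := by
      intro n
      have h1 := Summable.le_tsum hdiff n (fun j _ => hnn j)
      have h2 := hnn n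
      rw [hts] at h1
      linarith
    have hf0 : ∀ n : ℕ, f₀ n = 0 := by
      intro n
      by_contra hne
      have habs : 0 < |f₀ n| := abs_pos.mpr hne
      have : Lseq n * f₀ n < ‖f₀ n‖ := by
        calc Lseq n * f₀ n ≤ |Lseq n| * |f₀ n| := by
              rw [← abs_mul]; exact le_abs_self _
          _ < 1 * |f₀ n| := by
              refine mul_lt_mul_of_pos_right ?_ habs
              rw [abs_of_nonneg (Lseq_nonneg n)]; exact Lseq_lt_one n
          _ = ‖f₀ n‖ := by rw [one_mul, Real.norm_eq_abs]
      have := hz n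
      linarith
    have : (∑' n : ℕ, Lseq n * f₀ n) = 0 := by simp [hf0]
    rw [this] at hinterp
    norm_num at hinterp
  refine ⟨h1, fun Lhat hdual hnorm' => ?_⟩
  -- there is a coordinate with f₀ i ≠ 0
  have hex : ∃ i : ℕ, f₀ i ≠ 0 := by
    by_contra h
    push_neg at h
    have : (∑' n : ℕ, Lseq n * f₀ n) = 0 := by
      simp [h]
    rw [this] at hinterp; norm_num at hinterp
  obtain ⟨i, hi⟩ := hex
  -- each term of the duality sum is extremal
  have hbd : ∀ n : ℕ, Lhat n * f₀ n ≤ ‖Lhat‖ * ‖f₀ n‖ := fun n => by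
    calc Lhat n * f₀ n ≤ |Lhat n * f₀ n| := le_abs_self _
      _ = |Lhat n| * |f₀ n| := abs_mul _ _
      _ ≤ ‖Lhat‖ * ‖f₀ n‖ := by
          refine mul_le_mul_of_nonneg_right ?_ (abs_nonneg _)
          exact lp.norm_apply_le_norm ENNReal.top_ne_zero Lhat n
  have hsumLh : Summable fun n : ℕ => Lhat n * f₀ n := by
    refine Summable.of_norm_bounded (hsum.mul_left ‖Lhat‖) fun n => ?_
    rw [norm_mul]
    exact mul_le_mul_of_nonneg_right (lp.norm_apply_le_norm ENNReal.top_ne_zero Lhat n)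
      (norm_nonneg _)
  have hdiff : Summable fun n : ℕ => ‖Lhat‖ * ‖f₀ n‖ - Lhat n * f₀ n :=
    (hsum.mul_left ‖Lhat‖).sub hsumLh
  have hts : (∑' n : ℕ, (‖Lhat‖ * ‖f₀ n‖ - Lhat n * f₀ n)) = 0 := by
    rw [Summable.tsum_sub (hsum.mul_left ‖Lhat‖) hsumLh, hdual, tsum_mul_left, ← hnorm, sub_self]
  have hzero : ∀ n : ℕ, ‖Lhat‖ * ‖f₀ n‖ - Lhat n * f₀ n = 0 := by
    intro n
    have h1 := Summable.le_tsum hdiff n (fun j _ => sub_nonneg.mpr (hbd j))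
    have h2 := sub_nonneg.mpr (hbd n)
    rw [hts] at h1
    linarith
  -- extract |Lhat i| ≥ ‖f₀‖
  have hLi : ‖f₀‖ ≤ |Lhat i| := by
    have h0 := hzero i
    have : Lhat i * f₀ i = ‖Lhat‖ * ‖f₀ i‖ := by linarith
    have h2 : ‖Lhat‖ * |f₀ i| ≤ |Lhat i| * |f₀ i| := by
      calc ‖Lhat‖ * |f₀ i| = Lhat i * f₀ i := by
            rw [this, Real.norm_eq_abs]
        _ ≤ |Lhat i * f₀ i| := le_abs_self _
        _ = |Lhat i| * |f₀ i| := abs_mul _ _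
    have hfi : 0 < |f₀ i| := abs_pos.mpr hi
    have := le_of_mul_le_mul_right (by linarith : ‖Lhat‖ * |f₀ i| ≤ |Lhat i| * |f₀ i|) hfi
    rw [hnorm'] at this; exact this
  have hdiffcoe : (Lhat - Lseq) i = Lhat i - Lseq i := by
    simp
  calc ‖f₀‖ - 1 ≤ |Lhat i| - |Lseq i| := by
        have : |Lseq i| ≤ 1 := by
          rw [abs_of_nonneg (Lseq_nonneg i)]; exact (Lseq_lt_one i).le
        linarith
    _ ≤ |Lhat i - Lseq i| := by
        have := abs_sub_abs_le_abs_sub (Lhat i) (Lseq i)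
        linarith
    _ = ‖(Lhat - Lseq) i‖ := by rw [hdiffcoe, Real.norm_eq_abs]
    _ ≤ ‖Lhat - Lseq‖ := lp.norm_apply_le_norm ENNReal.top_ne_zero _ i
end
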